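/- If $2^\kappa = \kappa^+$ and $\lambda = \kappa^+$, then $\lambda \times \lambda$ can be partitioned into $\lambda$ many $(\kappa,\lambda)$-thick subsets. -/
import Mathlib
open Cardinal Set

lemma diff_nonempty_of_mk_lt' {α : Type*} {s t : Set α} (h : #s < #t) : (t \ s).Nonempty := by
  rw [Set.nonempty_iff_ne_empty]
  intro he
  rw [Set.diff_eq_empty] at he
  exact absurd (Cardinal.mk_le_mk_of_subset he) h.not_ge

lemma sdr {β γ ι : Type} [LinearOrder γ] [WellFoundedLT γ] [Nonempty β]
    (u : ι ↪ γ) (M : ι → Set β)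
    (h : ∀ i, #(Set.Iio (u i)) < #(M i)) :
    ∃ f : ι → β, Function.Injective f ∧ ∀ i, f i ∈ M i := by
  classical
  have wf : WellFounded ((· < ·) : γ → γ → Prop) := wellFounded_lt
  have key : ∀ (g : γ) (ih : ∀ g', g' < g → β) (i : ι), u i = g →
      (M i \ Set.range (fun p : {g' // g' < g} => ih p.1 p.2)).Nonempty := by
    intro g ih i hi
    apply diff_nonempty_of_mk_lt'
    refine lt_of_le_of_lt ?_ (h i)
    subst hi
    exact mk_range_le
  set body : ∀ g : γ, (∀ g', g' < g → β) → β := fun g ih =>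
    if hg : ∃ i, u i = g then (key g ih hg.choose hg.choose_spec).choose
    else Classical.arbitrary β with hbody
  set F : γ → β := wf.fix body with hF
  have hfix : ∀ g, F g = body g (fun g' _ => F g') := fun g => wf.fix_eq body g
  have main : ∀ i : ι, F (u i) ∈ M i ∧
      F (u i) ∉ Set.range (fun p : {g' // g' < u i} => F p.1) := by
    intro i
    have hg : ∃ j, u j = u i := ⟨i, rfl⟩
    have hval : F (u i) = (key (u i) (fun g' _ => F g') hg.choose hg.choose_spec).choose := by
      rw [hfix]
      simp only [hbody]
      rw [dif_pos hg]
    have hspec := (key (u i) (fun g' _ => F g') hg.choose hg.choose_spec).choose_spec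
    rw [← hval] at hspec
    have hji : hg.choose = i := u.injective hg.choose_spec
    rw [hji] at hspec
    exact ⟨hspec.1, hspec.2⟩
  refine ⟨fun i => F (u i), ?_, fun i => (main i).1⟩
  intro i j hij
  by_contra hne
  have hune : u i ≠ u j := fun e => hne (u.injective e)
  rcases lt_or_gt_of_ne hune with hlt | hlt
  · exact (main j).2 ⟨⟨u i, hlt⟩, by simpa using hij⟩
  · exact (main i).2 ⟨⟨u j, hlt⟩, by simpa using hij.symm⟩

lemma thick_partition_aux (κ lam : Cardinal.{0}) (hκ : ℵ₀ ≤ κ)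
    (hch : 2 ^ κ = Order.succ κ) (hlam : lam = Order.succ κ) :
    ∃ E : lam.ord.ToType → Set (lam.ord.ToType × lam.ord.ToType),
      (⋃ i, E i) = Set.univ ∧ Pairwise (Function.onFun Disjoint E) ∧
      ∀ i, ∀ M : Set lam.ord.ToType, #M = κ →
        ∀ N : Set lam.ord.ToType, #N = lam →
          (E i ∩ M ×ˢ N).Nonempty := by
  classical
  set β := lam.ord.ToType with hβdef
  set γ := κ.ord.ToType with hγdef
  have hβ : #β = lam := by rw [hβdef, mk_toType, card_ord]
  have hγ : #γ = κ := by rw [hγdef, mk_toType, card_ord]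
  have hκlam : κ < lam := by
    rw [hlam, ← hch]; exact Cardinal.cantor κ
  have hlaminf : ℵ₀ ≤ lam := hκ.trans hκlam.le
  haveI : Nonempty β := mk_ne_zero_iff.mp (by rw [hβ]; exact (aleph0_pos.trans_le hlaminf).ne')
  haveI : Nonempty γ := mk_ne_zero_iff.mp (by rw [hγ]; exact (aleph0_pos.trans_le hκ).ne')
  -- the collection of κ-sized subsets of β
  set S := {M : Set β // #(M : Set β) = κ} with hSdef
  have hScard : #S ≤ lam := by
    have hemb : ∀ s : S, Nonempty (γ ≃ (s.1 : Set β)) := by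
      intro s
      exact Cardinal.eq.mp (hγ.trans s.2.symm)
    set Φ : S → (γ → β) := fun s => fun g => ((hemb s).some g : β) with hΦ
    have hrange : ∀ s : S, Set.range (Φ s) = s.1 := by
      intro s
      have : Set.range (Φ s) = Subtype.val '' Set.range ((hemb s).some) := by
        rw [hΦ]; exact Set.range_comp _ _
      rw [this, Equiv.range_eq_univ, Set.image_univ, Subtype.range_coe]
    have hΦinj : Function.Injective Φ := by
      intro s t hst
      apply Subtype.ext
      rw [← hrange s, ← hrange t, hst]
    have h1 : #S ≤ #(γ → β) := mk_le_of_injective hΦinj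
    have h2 : #(γ → β) = lam ^ κ := by rw [← Cardinal.power_def, hβ, hγ]
    have h3 : lam = 2 ^ κ := by rw [hlam, ← hch]
    have h4 : lam ^ κ = lam := by
      rw [h3, ← Cardinal.power_mul, Cardinal.mul_eq_self hκ]
    rw [h2, h4] at h1
    exact h1
  -- the type of requirements
  set P := S × β with hPdef
  have hPcard : #P ≤ lam := by
    have : #P = #S * #β := by rw [hPdef]; simp
    rw [this, hβ]
    calc #S * lam ≤ lam * lam := by
          exact mul_le_mul' hScard le_rfl
      _ = lam := Cardinal.mul_eq_self hlaminf
  haveI : Nonempty S := by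
    have hle : κ ≤ #β := by rw [hβ]; exact hκlam.le
    obtain ⟨Mset, hMset⟩ := Cardinal.le_mk_iff_exists_set.mp hle
    exact ⟨⟨Mset, hMset⟩⟩
  haveI : Nonempty P := inferInstance
  obtain ⟨j⟩ : Nonempty (P ↪ β) := Cardinal.le_def P β |>.mp (by rw [hβ]; exact hPcard)
  set φ : β → P := Function.invFun j with hφdef
  have hφ : Function.Surjective φ := Function.invFun_surjective j.injective
  -- per-column representative choice
  have hemb2 : ∀ b : β, Nonempty (↥(Set.Iio b) ↪ γ) := by
    intro b
    apply (Cardinal.le_def _ _).mp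
    rw [hγ]
    have h2 : #(Set.Iio b) < Order.succ κ := by
      rw [← hlam]; exact Cardinal.mk_Iio_ord_toType b
    exact Order.lt_succ_iff.mp h2
  have hcol : ∀ b : β, ∃ f : ↥(Set.Iio b) → β, Function.Injective f ∧
      ∀ x, f x ∈ ((φ x.1).1 : S).1 := by
    intro b
    exact sdr (hemb2 b).some (fun x => ((φ x.1).1 : S).1)
      (fun x => by rw [((φ x.1).1 : S).2]; exact Cardinal.mk_Iio_ord_toType _)
  set fcol : ∀ b : β, ↥(Set.Iio b) → β := fun b => (hcol b).choose with hfcol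
  have finj : ∀ b, Function.Injective (fcol b) := fun b => (hcol b).choose_spec.1
  have fmem : ∀ b (x : ↥(Set.Iio b)), fcol b x ∈ ((φ x.1).1 : S).1 :=
    fun b => (hcol b).choose_spec.2
  -- the coloring
  set c : β × β → β := fun p =>
    if h : ∃ x : ↥(Set.Iio p.2), fcol p.2 x = p.1 then (φ h.choose.1).2
    else Classical.arbitrary β with hc
  refine ⟨fun i => {p | c p = i}, ?_, ?_, ?_⟩
  · ext p
    simp only [Set.mem_iUnion, Set.mem_setOf_eq, Set.mem_univ, iff_true]
    exact ⟨c p, rfl⟩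
  · intro i i' hne
    rw [Function.onFun, Set.disjoint_left]
    intro p hp hp'
    exact hne (hp.symm.trans hp')
  · intro i M hM N hN
    obtain ⟨x₀, hx₀⟩ := hφ (⟨M, hM⟩, i)
    -- find b ∈ N with x₀ < b
    have hIic : #(Set.Iic x₀) < lam := by
      have h1 : #(Set.Iic x₀) ≤ #(Set.Iio x₀) + #({x₀} : Set β) := by
        rw [← Set.Iio_union_right]
        exact Cardinal.mk_union_le _ _
      refine lt_of_le_of_lt h1 (Cardinal.add_lt_of_lt hlaminf (Cardinal.mk_Iio_ord_toType x₀) ?_)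
      rw [Cardinal.mk_singleton]
      exact lt_of_lt_of_le Cardinal.one_lt_aleph0 hlaminf
    have hNsub : ¬ N ⊆ Set.Iic x₀ := by
      intro hsub
      have hle := Cardinal.mk_le_mk_of_subset hsub
      rw [hN] at hle
      exact absurd hle hIic.not_ge
    obtain ⟨b, hbN, hbx⟩ := Set.not_subset.mp hNsub
    have hx₀b : x₀ < b := lt_of_not_ge (fun h => hbx (Set.mem_Iic.mpr h))
    set x : ↥(Set.Iio b) := ⟨x₀, hx₀b⟩ with hx
    set a : β := fcol b x with ha
    have haM : a ∈ M := by
      have := fmem b x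
      rw [hx₀] at this
      exact this
    refine ⟨(a, b), ?_, ⟨haM, hbN⟩⟩
    show c (a, b) = i
    have hex : ∃ x' : ↥(Set.Iio b), fcol b x' = a := ⟨x, rfl⟩
    have : c (a, b) = (φ hex.choose.1).2 := by
      rw [hc]
      exact dif_pos hex
    rw [this]
    have hxx : hex.choose = x := finj b hex.choose_spec
    rw [hxx]
    show (φ x₀).2 = i
    rw [hx₀]

/-- if `2^κ = κ⁺` and `λ = κ⁺`, then `λ × λ` can be partitioned into
`λ` many `(κ,λ)`-thick subsets. -/
theorem stmt12 (κ lam : Cardinal.{0}) (hκ : ℵ₀ ≤ κ)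
    (hch : 2 ^ κ = Order.succ κ) (hlam : lam = Order.succ κ) :
    ∃ E : (Quotient.out lam) → Set ((Quotient.out lam) × (Quotient.out lam)),
      (⋃ i, E i) = Set.univ ∧ Pairwise (Function.onFun Disjoint E) ∧
      ∀ i, ∀ M : Set (Quotient.out lam), #M = κ →
        ∀ N : Set (Quotient.out lam), #N = lam →
          (E i ∩ M ×ˢ N).Nonempty := by
  classical
  obtain ⟨E, hU, hD, hT⟩ := thick_partition_aux κ lam hκ hch hlam
  have hα : #(Quotient.out lam) = lam := Cardinal.mk_out lam
  have hβ : #(lam.ord.ToType) = lam := by rw [mk_toType, card_ord]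
  obtain ⟨e⟩ : Nonempty (Quotient.out lam ≃ lam.ord.ToType) :=
    Cardinal.eq.mp (hα.trans hβ.symm)
  refine ⟨fun i => {p | (e p.1, e p.2) ∈ E (e i)}, ?_, ?_, ?_⟩
  · ext p
    simp only [Set.mem_iUnion, Set.mem_setOf_eq, Set.mem_univ, iff_true]
    have hq : (e p.1, e p.2) ∈ ⋃ i, E i := by rw [hU]; trivial
    obtain ⟨i, hi⟩ := Set.mem_iUnion.mp hq
    exact ⟨e.symm i, by rwa [Equiv.apply_symm_apply]⟩
  · intro i i' hne
    rw [Function.onFun, Set.disjoint_left]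
    intro p hp hp'
    have hee : e i ≠ e i' := fun h => hne (e.injective h)
    exact (Set.disjoint_left.mp (hD hee)) hp hp'
  · intro i M hM N hN
    have hM' : #(e '' M) = κ := by rw [Cardinal.mk_image_eq e.injective]; exact hM
    have hN' : #(e '' N) = lam := by rw [Cardinal.mk_image_eq e.injective]; exact hN
    obtain ⟨q, hqE, hq1, hq2⟩ := hT (e i) _ hM' _ hN'
    obtain ⟨a, haM, ha⟩ := hq1
    obtain ⟨b, hbN, hb⟩ := hq2
    refine ⟨(a, b), ?_, ⟨haM, hbN⟩⟩
    show (e a, e b) ∈ E (e i)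
    rw [ha, hb]
    exact hqE
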